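/- The 3×3×3 tensor Q with frontal layers (1/2)·[[0,1,1],[1,1,0],[1,0,1]], (1/2)·[[1,1,0],[0,1,1],[1,0,1]], (1/2)·[[1,0,1],[1,0,1],[0,2,0]] is line-stochastic (every line sum along each of the three directions equals 1), but Q is not a convex combination of (0,1)-valued line-stochastic tensors. -/

import Mathlib

/-- A real `3 × 3 × 3` tensor is line-stochastic if it is nonnegative and all
line sums in the three directions equal `1`. -/
def LineStochastic3 (A : Fin 3 → Fin 3 → Fin 3 → ℝ) : Prop :=
  (∀ i j k, 0 ≤ A i j k) ∧
  (∀ j k, (∑ i, A i j k) = 1) ∧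
  (∀ i k, (∑ j, A i j k) = 1) ∧
  (∀ i j, (∑ k, A i j k) = 1)

/-- The tensor `Q` with frontal layers
`(1/2)[[0,1,1],[1,1,0],[1,0,1]]`, `(1/2)[[1,1,0],[0,1,1],[1,0,1]]`,
`(1/2)[[1,0,1],[1,0,1],[0,2,0]]`; `Q i j k` is the `(i,j)` entry of layer `k`. -/
noncomputable def Q : Fin 3 → Fin 3 → Fin 3 → ℝ := fun i j k =>
  (![![![0, 1, 1], ![1, 1, 0], ![1, 0, 1]],
     ![![1, 1, 0], ![0, 1, 1], ![1, 0, 1]],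
     ![![1, 0, 1], ![1, 0, 1], ![0, 2, 0]]] k i j) / 2

/-- No 0-1 line-stochastic tensor is supported on the support of `Q`. -/
lemma key (a : Fin 3 → Fin 3 → Fin 3 → ℝ) (hls : LineStochastic3 a)
    (h01 : ∀ i j k, a i j k = 0 ∨ a i j k = 1)
    (h212 : a 2 1 2 = 1)
    (z1 : a 0 0 0 = 0) (z2 : a 1 2 0 = 0) (z3 : a 2 1 0 = 0)
    (z4 : a 0 2 1 = 0) (z5 : a 1 0 1 = 0) (z6 : a 2 1 1 = 0)
    (z7 : a 0 1 2 = 0) (z8 : a 1 1 2 = 0) (z9 : a 2 0 2 = 0)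
    (z10 : a 2 2 2 = 0) : False := by
  obtain ⟨hnn, hi, hj, hk⟩ := hls
  simp only [Fin.sum_univ_three] at hi hj hk
  rcases h01 0 0 1 with h | h <;>
  linarith [hi 0 0, hi 0 1, hi 0 2, hi 1 0, hi 1 1, hi 1 2, hi 2 0, hi 2 1, hi 2 2,
    hj 0 0, hj 0 1, hj 0 2, hj 1 0, hj 1 1, hj 1 2, hj 2 0, hj 2 1, hj 2 2,
    hk 0 0, hk 0 1, hk 0 2, hk 1 0, hk 1 1, hk 1 2, hk 2 0, hk 2 1, hk 2 2,
    hnn 0 0 0, hnn 0 0 1, hnn 0 0 2, hnn 0 1 0, hnn 0 1 1, hnn 0 1 2,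
    hnn 0 2 0, hnn 0 2 1, hnn 0 2 2, hnn 1 0 0, hnn 1 0 1, hnn 1 0 2,
    hnn 1 1 0, hnn 1 1 1, hnn 1 1 2, hnn 1 2 0, hnn 1 2 1, hnn 1 2 2,
    hnn 2 0 0, hnn 2 0 1, hnn 2 0 2, hnn 2 1 0, hnn 2 1 1, hnn 2 1 2,
    hnn 2 2 0, hnn 2 2 1, hnn 2 2 2]

theorem stmt_18 :
    LineStochastic3 Q ∧
      ¬ ∃ (m : ℕ) (l : Fin m → ℝ) (T : Fin m → Fin 3 → Fin 3 → Fin 3 → ℝ),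
        (∀ s, 0 ≤ l s) ∧ (∑ s, l s) = 1 ∧
        (∀ s, LineStochastic3 (T s) ∧ ∀ i j k, T s i j k = 0 ∨ T s i j k = 1) ∧
        (∀ i j k, Q i j k = ∑ s, l s * T s i j k) := by
  constructor
  · refine ⟨?_, ?_, ?_, ?_⟩
    · intro i j k
      fin_cases i <;> fin_cases j <;> fin_cases k <;> norm_num [Q]
    · intro j k
      fin_cases j <;> fin_cases k <;> norm_num [Q, Matrix.cons_val_two, Fin.sum_univ_three, Matrix.vecHead, Matrix.vecTail]
    · intro i k
      fin_cases i <;> fin_cases k <;> norm_num [Q, Matrix.cons_val_two, Fin.sum_univ_three, Matrix.vecHead, Matrix.vecTail]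
    · intro i j
      fin_cases i <;> fin_cases j <;> norm_num [Q, Matrix.cons_val_two, Fin.sum_univ_three, Matrix.vecHead, Matrix.vecTail]
  · rintro ⟨m, l, T, hl, hsum, hT, hQ⟩
    -- there is a positive weight
    obtain ⟨s0, hs0⟩ : ∃ s, 0 < l s := by
      by_contra h
      push_neg at h
      have : (∑ s, l s) = 0 :=
        Finset.sum_eq_zero fun s _ => le_antisymm (h s) (hl s)
      rw [hsum] at this; norm_num at this
    have hTle : ∀ s i j k, T s i j k ≤ 1 := by
      intro s i j k
      rcases (hT s).2 i j k with h | h <;> simp [h]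
    -- at zero entries of Q, T s0 vanishes
    have hzero : ∀ i j k, Q i j k = 0 → T s0 i j k = 0 := by
      intro i j k h
      have hsum0 : (∑ s, l s * T s i j k) = 0 := by rw [← hQ, h]
      have h0 : l s0 * T s0 i j k = 0 :=
        (Finset.sum_eq_zero_iff_of_nonneg fun s _ =>
          mul_nonneg (hl s) ((hT s).1.1 i j k)).mp hsum0 s0 (Finset.mem_univ s0)
      rcases mul_eq_zero.mp h0 with h' | h'
      · exact absurd h' (ne_of_gt hs0)
      · exact h'
    -- at entry (2,1,2), Q = 1 forces T s0 2 1 2 = 1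
    have h212 : T s0 2 1 2 = 1 := by
      have hq : Q 2 1 2 = 1 := by norm_num [Q, Matrix.cons_val_two]
      have h1 : (∑ s, l s * (1 - T s 2 1 2)) = 0 := by
        simp only [mul_sub, mul_one]
        rw [Finset.sum_sub_distrib, hsum, ← hQ 2 1 2, hq]
        norm_num
      have h0 : l s0 * (1 - T s0 2 1 2) = 0 :=
        (Finset.sum_eq_zero_iff_of_nonneg fun s _ =>
          mul_nonneg (hl s) (by linarith [hTle s 2 1 2])).mp h1 s0 (Finset.mem_univ s0)
      rcases mul_eq_zero.mp h0 with h' | h'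
      · exact absurd h' (ne_of_gt hs0)
      · linarith
    exact key (T s0) (hT s0).1 (hT s0).2 h212
      (hzero 0 0 0 (by norm_num [Q, Matrix.cons_val_two])) (hzero 1 2 0 (by norm_num [Q, Matrix.cons_val_two]))
      (hzero 2 1 0 (by norm_num [Q, Matrix.cons_val_two])) (hzero 0 2 1 (by norm_num [Q, Matrix.cons_val_two]))
      (hzero 1 0 1 (by norm_num [Q, Matrix.cons_val_two])) (hzero 2 1 1 (by norm_num [Q, Matrix.cons_val_two]))
      (hzero 0 1 2 (by norm_num [Q, Matrix.cons_val_two])) (hzero 1 1 2 (by norm_num [Q, Matrix.cons_val_two]))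
      (hzero 2 0 2 (by norm_num [Q, Matrix.cons_val_two])) (hzero 2 2 2 (by norm_num [Q, Matrix.cons_val_two]))
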